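/- Let T > 0, C > 0, k ≥ 0, m > k with m ≥ 2, K > 0 and λ, ε, β > 0. Let w : (0,T)×H → ℝ be bounded on bounded subsets of (0,T)×H and satisfy w(t,x) ≥ −C(1+‖x‖^k) for all (t,x) ∈ (0,T)×H. Then for every R > 0 there exists a constant M > 0 such that the inf-convolution v = w_{λ,ε,β} satisfies |v(t,x) − v(s,y)| ≤ M(|t−s| + ‖x−y‖_{-2}) for all t,s ∈ (0,T) and all x,y ∈ B_R. -/

import Mathlib

open scoped InnerProductSpace

/-- The inf-convolution
`w_{λ,ε,β}(t,x) = inf_{(s,y)∈(0,T)×H} { w(s,y) + ‖x−y‖₋₁²/(2ε) + (t−s)²/(2β) + λ e^{2mK(T−s)}‖y‖^m }`,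
where `‖z‖₋₁² = ⟨Bz,z⟩`. -/
noncomputable def infConv {H : Type*} [NormedAddCommGroup H] [InnerProductSpace ℝ H]
    (B : H →L[ℝ] H) (T m K lam ε β : ℝ) (w : ℝ → H → ℝ) (t : ℝ) (x : H) : ℝ :=
  sInf ((fun p : ℝ × H =>
      w p.1 p.2 + ⟪B (x - p.2), x - p.2⟫_ℝ / (2 * ε) + (t - p.1) ^ 2 / (2 * β)
        + lam * Real.exp (2 * m * K * (T - p.1)) * ‖p.2‖ ^ m) ''
    (Set.Ioo 0 T ×ˢ (Set.univ : Set H)))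

/-- The integrand of the inf-convolution, as a function of the index point `p`. -/
noncomputable def infConvF {H : Type*} [NormedAddCommGroup H] [InnerProductSpace ℝ H]
    (B : H →L[ℝ] H) (T m K lam ε β : ℝ) (w : ℝ → H → ℝ) (t : ℝ) (x : H) (p : ℝ × H) : ℝ :=
  w p.1 p.2 + ⟪B (x - p.2), x - p.2⟫_ℝ / (2 * ε) + (t - p.1) ^ 2 / (2 * β)
    + lam * Real.exp (2 * m * K * (T - p.1)) * ‖p.2‖ ^ m

lemma infConv_eq_sInf {H : Type*} [NormedAddCommGroup H] [InnerProductSpace ℝ H]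
    (B : H →L[ℝ] H) (T m K lam ε β : ℝ) (w : ℝ → H → ℝ) (t : ℝ) (x : H) :
    infConv B T m K lam ε β w t x
      = sInf (infConvF B T m K lam ε β w t x '' (Set.Ioo 0 T ×ˢ (Set.univ : Set H))) := rfl

/-- Coercivity of `r ↦ lam r^m − C r^k` for `k < m`. -/
lemma coercive_aux (C lam m k : ℝ) (hC : 0 < C) (hlam : 0 < lam)
    (hk : 0 ≤ k) (hkm : k < m) (A : ℝ) (hA : 0 ≤ A) :
    ∃ ρ ≥ (1 : ℝ), (∀ r : ℝ, 0 ≤ r → -(C * ρ ^ k) ≤ lam * r ^ m - C * r ^ k) ∧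
      (∀ r : ℝ, ρ < r → A ≤ lam * r ^ m - C * r ^ k) := by
  have hm0 : 0 < m := lt_of_le_of_lt hk hkm
  have hmk : 0 < m - k := by linarith
  set r₀ : ℝ := max 1 ((2 * C / lam) ^ (m - k)⁻¹) with hr₀def
  set ρ : ℝ := max r₀ ((2 * A / lam) ^ m⁻¹) with hρdef
  have hρ1 : (1 : ℝ) ≤ ρ := le_trans (le_max_left _ _) (le_max_left _ _)
  have sub1 : ∀ r : ℝ, ρ ≤ r → C * r ^ k ≤ lam / 2 * r ^ m := by
    intro r hr
    have hr1 : (1 : ℝ) ≤ r := le_trans hρ1 hr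
    have hr0 : (0 : ℝ) < r := lt_of_lt_of_le one_pos hr1
    have hbase : ((2 * C / lam) ^ (m - k)⁻¹ : ℝ) ≤ r :=
      le_trans (le_max_right _ _) (le_trans (le_max_left _ _) hr)
    have h1 : (2 * C / lam : ℝ) ≤ r ^ (m - k) := by
      calc (2 * C / lam : ℝ) = ((2 * C / lam) ^ (m - k)⁻¹) ^ (m - k) :=
            (Real.rpow_inv_rpow (by positivity) hmk.ne').symm
        _ ≤ r ^ (m - k) := Real.rpow_le_rpow (by positivity) hbase hmk.le
    have h1' : 2 * C ≤ r ^ (m - k) * lam := (div_le_iff₀ hlam).mp h1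
    have hrm : r ^ m = r ^ k * r ^ (m - k) := by
      rw [← Real.rpow_add hr0]; ring_nf
    have hrk : (0 : ℝ) ≤ r ^ k := Real.rpow_nonneg hr0.le k
    nlinarith [mul_le_mul_of_nonneg_left h1' hrk]
  have sub2 : ∀ r : ℝ, ρ ≤ r → A ≤ lam / 2 * r ^ m := by
    intro r hr
    have hr1 : (1 : ℝ) ≤ r := le_trans hρ1 hr
    have hbase : ((2 * A / lam) ^ m⁻¹ : ℝ) ≤ r := le_trans (le_max_right _ _) hr
    have h1 : (2 * A / lam : ℝ) ≤ r ^ m := by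
      calc (2 * A / lam : ℝ) = ((2 * A / lam) ^ m⁻¹) ^ m :=
            (Real.rpow_inv_rpow (by positivity) hm0.ne').symm
        _ ≤ r ^ m := Real.rpow_le_rpow (by positivity) hbase hm0.le
    have h1' : 2 * A ≤ r ^ m * lam := (div_le_iff₀ hlam).mp h1
    nlinarith
  refine ⟨ρ, hρ1, ?_, ?_⟩
  · intro r hr
    rcases le_or_gt r ρ with hcase | hcase
    · have h1 : C * r ^ k ≤ C * ρ ^ k :=
        mul_le_mul_of_nonneg_left (Real.rpow_le_rpow hr hcase hk) hC.le
      have h2 : (0 : ℝ) ≤ lam * r ^ m := mul_nonneg hlam.le (Real.rpow_nonneg hr m)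
      linarith
    · have h1 := sub1 r hcase.le
      have h2 := sub2 r hcase.le
      have h3 : (0 : ℝ) ≤ lam / 2 * r ^ m :=
        mul_nonneg (by linarith) (Real.rpow_nonneg hr m)
      have h4 : (0 : ℝ) ≤ C * ρ ^ k :=
        mul_nonneg hC.le (Real.rpow_nonneg (by linarith) k)
      linarith
  · intro r hr
    have h1 := sub1 r hr.le
    have h2 := sub2 r hr.le
    linarith

/-- Lemma 4.2(i) (inf-convolution case): if `w` is bounded on bounded sets and
`w(t,x) ≥ −C(1+‖x‖^k)` with `k < m`, then for every `R > 0` the inf-convolution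
`v = w_{λ,ε,β}` satisfies `|v(t,x) − v(s,y)| ≤ M(|t−s| + ‖x−y‖₋₂)` on `(0,T) × B_R`,
where `‖z‖₋₂ = ‖Bz‖`. -/
theorem infConv_lipschitz_estimate
    {H : Type*} [NormedAddCommGroup H] [InnerProductSpace ℝ H] [CompleteSpace H]
    [TopologicalSpace.SeparableSpace H]
    (B : H →L[ℝ] H) (hBsa : IsSelfAdjoint B) (hBpos : ∀ x : H, 0 ≤ ⟪B x, x⟫_ℝ)
    (T C k m K lam ε β : ℝ)
    (hT : 0 < T) (hC : 0 < C) (hk : 0 ≤ k) (hkm : k < m) (hm : 2 ≤ m)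
    (hK : 0 < K) (hlam : 0 < lam) (hε : 0 < ε) (hβ : 0 < β)
    (w : ℝ → H → ℝ)
    (hbdd : ∀ R > (0 : ℝ), ∃ M : ℝ, ∀ t ∈ Set.Ioo (0 : ℝ) T, ∀ x : H, ‖x‖ ≤ R → |w t x| ≤ M)
    (hgrowth : ∀ t ∈ Set.Ioo (0 : ℝ) T, ∀ x : H, -C * (1 + ‖x‖ ^ k) ≤ w t x) :
    ∀ R > (0 : ℝ), ∃ M > (0 : ℝ), ∀ t ∈ Set.Ioo (0 : ℝ) T, ∀ s ∈ Set.Ioo (0 : ℝ) T,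
      ∀ x y : H, ‖x‖ < R → ‖y‖ < R →
        |infConv B T m K lam ε β w t x - infConv B T m K lam ε β w s y|
          ≤ M * (|t - s| + ‖B (x - y)‖) := by
  classical
  have hm0 : (0 : ℝ) < m := by linarith
  have hsymm : ∀ u v : H, ⟪B u, v⟫_ℝ = ⟪u, B v⟫_ℝ :=
    ContinuousLinearMap.isSelfAdjoint_iff_isSymmetric.mp hBsa
  have hfapp : ∀ (t : ℝ) (x : H) (s' : ℝ) (y' : H),
      infConvF B T m K lam ε β w t x (s', y')
        = w s' y' + ⟪B (x - y'), x - y'⟫_ℝ / (2 * ε) + (t - s') ^ 2 / (2 * β)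
          + lam * Real.exp (2 * m * K * (T - s')) * ‖y'‖ ^ m := fun _ _ _ _ => rfl
  intro R hR
  obtain ⟨M₁, hM₁⟩ := hbdd 1 one_pos
  have hTmem : (T / 2) ∈ Set.Ioo (0 : ℝ) T := ⟨by linarith, by linarith⟩
  have hM₁0 : (0 : ℝ) ≤ M₁ := (abs_nonneg _).trans (hM₁ (T / 2) hTmem 0 (by simp))
  obtain ⟨U, hUdef⟩ : ∃ U : ℝ, U = M₁ + ‖B‖ * R ^ 2 / (2 * ε) := ⟨_, rfl⟩
  have hU0 : (0 : ℝ) ≤ U := by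
    have h1 : (0 : ℝ) ≤ ‖B‖ * R ^ 2 / (2 * ε) := by positivity
    rw [hUdef]; linarith
  obtain ⟨ρ, hρ1, hglb, hcoer⟩ := coercive_aux C lam m k hC hlam hk hkm (U + C + 2) (by linarith)
  have hρ0 : (0 : ℝ) ≤ ρ := by linarith
  -- per-element lower bound
  have hflow : ∀ (t : ℝ) (x : H) (s' : ℝ) (y' : H), s' ∈ Set.Ioo (0 : ℝ) T →
      -C + (lam * ‖y'‖ ^ m - C * ‖y'‖ ^ k) ≤ infConvF B T m K lam ε β w t x (s', y') := by
    intro t x s' y' hs'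
    have h1 : -C * (1 + ‖y'‖ ^ k) ≤ w s' y' := hgrowth s' hs' y'
    have h2 : (0 : ℝ) ≤ ⟪B (x - y'), x - y'⟫_ℝ / (2 * ε) :=
      div_nonneg (hBpos _) (by linarith)
    have h3 : (0 : ℝ) ≤ (t - s') ^ 2 / (2 * β) := div_nonneg (sq_nonneg _) (by linarith)
    have hy : (0 : ℝ) ≤ ‖y'‖ ^ m := Real.rpow_nonneg (norm_nonneg _) m
    have harg : (0 : ℝ) ≤ 2 * m * K * (T - s') := by
      have hpos : (0 : ℝ) < (2 * m) * (K * (T - s')) :=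
        mul_pos (by linarith) (mul_pos hK (by linarith [hs'.2]))
      linarith
    have he : (1 : ℝ) ≤ Real.exp (2 * m * K * (T - s')) := Real.one_le_exp harg
    have h4 : lam * ‖y'‖ ^ m ≤ lam * Real.exp (2 * m * K * (T - s')) * ‖y'‖ ^ m := by
      have := mul_le_mul_of_nonneg_right he (mul_nonneg hlam.le hy)
      nlinarith [this]
    rw [hfapp]
    linarith
  -- nonemptiness and boundedness below of the index sets
  have hne : ∀ (t : ℝ) (x : H),
      (infConvF B T m K lam ε β w t x '' (Set.Ioo (0 : ℝ) T ×ˢ (Set.univ : Set H))).Nonempty :=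
    fun t x => ⟨infConvF B T m K lam ε β w t x (T / 2, 0),
      Set.mem_image_of_mem _ ⟨hTmem, Set.mem_univ _⟩⟩
  have hbb : ∀ (t : ℝ) (x : H),
      BddBelow (infConvF B T m K lam ε β w t x '' (Set.Ioo (0 : ℝ) T ×ˢ (Set.univ : Set H))) := by
    intro t x
    refine ⟨-C + -(C * ρ ^ k), ?_⟩
    rintro z ⟨⟨s', y'⟩, hp, rfl⟩
    have h1 := hflow t x s' y' hp.1
    have h2 := hglb ‖y'‖ (norm_nonneg _)
    linarith
  -- upper bound for the inf-convolution on the ball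
  have hup : ∀ s ∈ Set.Ioo (0 : ℝ) T, ∀ y : H, ‖y‖ ≤ R →
      infConv B T m K lam ε β w s y ≤ U := by
    intro s hs y hy
    rw [infConv_eq_sInf]
    have hle : sInf (infConvF B T m K lam ε β w s y '' (Set.Ioo (0 : ℝ) T ×ˢ (Set.univ : Set H)))
        ≤ infConvF B T m K lam ε β w s y (s, 0) :=
      csInf_le (hbb s y) (Set.mem_image_of_mem _ ⟨hs, Set.mem_univ _⟩)
    refine hle.trans ?_
    have hval : infConvF B T m K lam ε β w s y (s, 0)
        = w s 0 + ⟪B y, y⟫_ℝ / (2 * ε) := by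
      rw [hfapp]
      rw [norm_zero, Real.zero_rpow hm0.ne', sub_zero, sub_self]
      ring
    have e2 : ⟪B y, y⟫_ℝ ≤ ‖B‖ * R ^ 2 := by
      have i1 := real_inner_le_norm (B y) y
      have i2 : ‖B y‖ ≤ ‖B‖ * ‖y‖ := B.le_opNorm y
      have j1 : ‖B y‖ * ‖y‖ ≤ ‖B‖ * ‖y‖ * ‖y‖ :=
        mul_le_mul_of_nonneg_right i2 (norm_nonneg y)
      have j2 : ‖y‖ * ‖y‖ ≤ R ^ 2 := by nlinarith [norm_nonneg y]
      have j3 : ‖B‖ * (‖y‖ * ‖y‖) ≤ ‖B‖ * R ^ 2 :=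
        mul_le_mul_of_nonneg_left j2 (norm_nonneg B)
      nlinarith [i1, j1, j3]
    have e3 := (abs_le.mp (hM₁ s hs 0 (by simp))).2
    have hdiv : ⟪B y, y⟫_ℝ / (2 * ε) ≤ ‖B‖ * R ^ 2 / (2 * ε) := by gcongr
    rw [hval, hUdef]
    linarith
  -- the Lipschitz constant
  obtain ⟨M0, hM0def⟩ : ∃ M0 : ℝ, M0 = T / β + (R + ρ) / ε + 1 := ⟨_, rfl⟩
  have hTβ : (0 : ℝ) < T / β := by positivity
  have hRρε : (0 : ℝ) ≤ (R + ρ) / ε := by positivity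
  have hM0pos : (0 : ℝ) < M0 := by rw [hM0def]; linarith
  have hM0a : T / β ≤ M0 := by rw [hM0def]; linarith
  have hM0b : (R + ρ) / ε ≤ M0 := by rw [hM0def]; linarith
  -- one-sided estimate
  have key : ∀ t ∈ Set.Ioo (0 : ℝ) T, ∀ s ∈ Set.Ioo (0 : ℝ) T, ∀ x y : H,
      ‖x‖ < R → ‖y‖ < R →
      infConv B T m K lam ε β w t x
        ≤ infConv B T m K lam ε β w s y + M0 * (|t - s| + ‖B (x - y)‖) := by
    intro t ht s hs x y hx hy
    refine le_of_forall_pos_le_add ?_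
    intro δ hδ
    have hδ'pos : (0 : ℝ) < min δ 1 := lt_min hδ one_pos
    obtain ⟨z, hz, hzlt⟩ := Real.lt_sInf_add_pos (hne s y) hδ'pos
    obtain ⟨⟨s', y'⟩, hp, rfl⟩ := hz
    have hs'mem : s' ∈ Set.Ioo (0 : ℝ) T := hp.1
    rw [← infConv_eq_sInf] at hzlt
    have hzU : infConvF B T m K lam ε β w s y (s', y') < U + 1 := by
      have h1 := hup s hs y hy.le
      have h2 : min δ 1 ≤ 1 := min_le_right δ 1
      linarith
    have hy'ρ : ‖y'‖ ≤ ρ := by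
      by_contra hcon
      push_neg at hcon
      have h1 := hcoer ‖y'‖ hcon
      have h2 := hflow s y s' y' hs'mem
      linarith
    have hvtx : infConv B T m K lam ε β w t x ≤ infConvF B T m K lam ε β w t x (s', y') := by
      rw [infConv_eq_sInf]
      exact csInf_le (hbb t x) (Set.mem_image_of_mem _ ⟨hs'mem, Set.mem_univ _⟩)
    -- difference of the two integrands
    have hinner : ⟪B (x - y'), x - y'⟫_ℝ - ⟪B (y - y'), y - y'⟫_ℝ
        = ⟪B (x - y), (x - y') + (y - y')⟫_ℝ := by
      have h1 : B (x - y) = B (x - y') - B (y - y') := by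
        rw [← map_sub]
        congr 1
        abel
      rw [h1, inner_sub_left, inner_add_right, inner_add_right]
      have h2 : ⟪B (y - y'), x - y'⟫_ℝ = ⟪B (x - y'), y - y'⟫_ℝ := by
        rw [hsymm, real_inner_comm]
      linarith
    have hnorm : ⟪B (x - y), (x - y') + (y - y')⟫_ℝ ≤ ‖B (x - y)‖ * (2 * R + 2 * ρ) := by
      have i1 := real_inner_le_norm (B (x - y)) ((x - y') + (y - y'))
      have i2 : ‖(x - y') + (y - y')‖ ≤ 2 * R + 2 * ρ := by
        calc ‖(x - y') + (y - y')‖ ≤ ‖x - y'‖ + ‖y - y'‖ := norm_add_le _ _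
          _ ≤ (‖x‖ + ‖y'‖) + (‖y‖ + ‖y'‖) := add_le_add (norm_sub_le _ _) (norm_sub_le _ _)
          _ ≤ 2 * R + 2 * ρ := by linarith
      have i3 : ‖B (x - y)‖ * ‖(x - y') + (y - y')‖ ≤ ‖B (x - y)‖ * (2 * R + 2 * ρ) :=
        mul_le_mul_of_nonneg_left i2 (norm_nonneg _)
      linarith
    have hsq : (t - s') ^ 2 - (s - s') ^ 2 ≤ |t - s| * (2 * T) := by
      have h1 : (t - s') ^ 2 - (s - s') ^ 2 = (t - s) * ((t - s') + (s - s')) := by ring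
      have h2 : (t - s) * ((t - s') + (s - s')) ≤ |t - s| * |(t - s') + (s - s')| := by
        rw [← abs_mul]
        exact le_abs_self _
      have h3 : |(t - s') + (s - s')| ≤ 2 * T := by
        have h4 : |t - s'| ≤ T :=
          abs_le.mpr ⟨by linarith [ht.1, hs'mem.2], by linarith [ht.2, hs'mem.1]⟩
        have h5 : |s - s'| ≤ T :=
          abs_le.mpr ⟨by linarith [hs.1, hs'mem.2], by linarith [hs.2, hs'mem.1]⟩
        calc |(t - s') + (s - s')| ≤ |t - s'| + |s - s'| := abs_add_le _ _
          _ ≤ 2 * T := by linarith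
      have h6 : |t - s| * |(t - s') + (s - s')| ≤ |t - s| * (2 * T) :=
        mul_le_mul_of_nonneg_left h3 (abs_nonneg _)
      linarith
    have hd1 : (⟪B (x - y'), x - y'⟫_ℝ - ⟪B (y - y'), y - y'⟫_ℝ) / (2 * ε)
        ≤ ‖B (x - y)‖ * ((R + ρ) / ε) := by
      have step : (⟪B (x - y'), x - y'⟫_ℝ - ⟪B (y - y'), y - y'⟫_ℝ) / (2 * ε)
          ≤ (‖B (x - y)‖ * (2 * R + 2 * ρ)) / (2 * ε) := by
        rw [hinner]
        gcongr
      refine step.trans (le_of_eq ?_)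
      field_simp
    have hd2 : ((t - s') ^ 2 - (s - s') ^ 2) / (2 * β) ≤ |t - s| * (T / β) := by
      have step : ((t - s') ^ 2 - (s - s') ^ 2) / (2 * β) ≤ (|t - s| * (2 * T)) / (2 * β) := by
        gcongr
      refine step.trans (le_of_eq ?_)
      field_simp
    have hmul1 : ‖B (x - y)‖ * ((R + ρ) / ε) ≤ ‖B (x - y)‖ * M0 :=
      mul_le_mul_of_nonneg_left hM0b (norm_nonneg _)
    have hmul2 : |t - s| * (T / β) ≤ |t - s| * M0 :=
      mul_le_mul_of_nonneg_left hM0a (abs_nonneg _)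
    have hdiff : infConvF B T m K lam ε β w t x (s', y')
        ≤ infConvF B T m K lam ε β w s y (s', y') + M0 * (|t - s| + ‖B (x - y)‖) := by
      rw [hfapp, hfapp]
      have hsplit : ((t - s') ^ 2) / (2 * β) - ((s - s') ^ 2) / (2 * β)
          = ((t - s') ^ 2 - (s - s') ^ 2) / (2 * β) := by ring
      have hsplit2 : ⟪B (x - y'), x - y'⟫_ℝ / (2 * ε) - ⟪B (y - y'), y - y'⟫_ℝ / (2 * ε)
          = (⟪B (x - y'), x - y'⟫_ℝ - ⟪B (y - y'), y - y'⟫_ℝ) / (2 * ε) := by ring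
      linarith [hd1, hd2, hmul1, hmul2]
    have hδ'le : min δ 1 ≤ δ := min_le_left δ 1
    linarith
  refine ⟨M0, hM0pos, ?_⟩
  intro t ht s hs x y hx hy
  rw [abs_sub_le_iff]
  constructor
  · have h := key t ht s hs x y hx hy
    linarith
  · have h := key s hs t ht y x hy hx
    have e1 : |s - t| = |t - s| := abs_sub_comm s t
    have e2 : ‖B (y - x)‖ = ‖B (x - y)‖ := by
      rw [← neg_sub x y, map_neg, norm_neg]
    rw [e1, e2] at h
    linarith
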